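/- arXiv:2408.09118 — 2 statements merged into one kernel-verified Lean document; each statement's English description precedes it below -/
import Mathlib

section
/- Let t > 0, k ∈ ℕ with k ≥ 1, τ = t/k, and λ, ε > 0. Then for any β ∈ [0,1], |e^{iετλ/2·k} - e^{2ik·arctan(ετλ/4)}| ≤ 2 k^β |ετλ/4 - arctan(ετλ/4)|^β ≤ C k^β (ετλ)^{3β} for an absolute constant C > 0. -/
open Real Complex

/-- `|e^{iθ} - 1| ≤ |θ|` for real `θ`. -/
lemma abs_exp_I_sub_one_le (θ : ℝ) :
    ‖Complex.exp (θ * Complex.I) - 1‖ ≤ |θ| := by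
  have h1 : Complex.exp (θ * Complex.I) - 1 =
      Complex.ofReal (Real.cos θ - 1) + Complex.ofReal (Real.sin θ) * Complex.I := by
    rw [Complex.exp_mul_I]
    push_cast
    ring
  have h2 : ‖Complex.exp (θ * Complex.I) - 1‖ = 2 * |Real.sin (θ / 2)| := by
    rw [h1, Complex.norm_def, Complex.normSq_add_mul_I]
    have hcθ : Real.cos θ = 1 - 2 * Real.sin (θ / 2) ^ 2 := by
      have h2 := Real.cos_two_mul' (θ / 2)
      have hp := Real.sin_sq_add_cos_sq (θ / 2)
      rw [show 2 * (θ / 2) = θ by ring] at h2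
      linarith
    have : (Real.cos θ - 1) ^ 2 + Real.sin θ ^ 2 = (2 * Real.sin (θ / 2)) ^ 2 := by
      have hp := Real.sin_sq_add_cos_sq θ
      nlinarith [hcθ, hp]
    rw [this, Real.sqrt_sq_eq_abs, abs_mul]
    norm_num
  rw [h2]
  calc 2 * |Real.sin (θ / 2)| ≤ 2 * |θ / 2| := by
        have := Real.abs_sin_le_abs (x := θ / 2)
        linarith
    _ = |θ| := by rw [abs_div, show |(2:ℝ)| = 2 from _root_.abs_two]; ring

/-- `|e^{ia} - e^{ib}| ≤ |a - b|` for real `a, b`. -/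
lemma abs_exp_I_sub_exp_I_le (a b : ℝ) :
    ‖Complex.exp (a * Complex.I) - Complex.exp (b * Complex.I)‖ ≤ |a - b| := by
  have h : Complex.exp (a * Complex.I) - Complex.exp (b * Complex.I) =
      Complex.exp (b * Complex.I) * (Complex.exp ((a - b : ℝ) * Complex.I) - 1) := by
    rw [mul_sub, ← Complex.exp_add]
    push_cast
    ring_nf
  rw [h, norm_mul, Complex.norm_exp_ofReal_mul_I, one_mul]
  exact abs_exp_I_sub_one_le _

/-- `arctan x ≤ x` for `0 ≤ x`. -/
lemma arctan_le_self' {x : ℝ} (hx : 0 ≤ x) : Real.arctan x ≤ x := by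
  have hmono : Monotone (fun y : ℝ => y - Real.arctan y) := by
    apply monotone_of_deriv_nonneg
    · exact differentiable_id.sub Real.differentiable_arctan
    · intro y
      have hd : HasDerivAt (fun y : ℝ => y - Real.arctan y) (1 - 1 / (1 + y ^ 2)) y :=
        (hasDerivAt_id y).sub (Real.hasDerivAt_arctan y)
      rw [hd.deriv]
      have h1 : (0:ℝ) < 1 + y ^ 2 := by positivity
      rw [sub_nonneg, div_le_one h1]
      nlinarith
  have := hmono hx
  simp [Real.arctan_zero] at this
  linarith

/-- `x - arctan x ≤ x^3 / 3` for `0 ≤ x`. -/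
lemma self_sub_arctan_le {x : ℝ} (hx : 0 ≤ x) : x - Real.arctan x ≤ x ^ 3 / 3 := by
  have hmono : Monotone (fun y : ℝ => y ^ 3 / 3 - y + Real.arctan y) := by
    apply monotone_of_deriv_nonneg
    · exact ((differentiable_id.pow 3).div_const 3).sub differentiable_id
        |>.add Real.differentiable_arctan
    · intro y
      have hd : HasDerivAt (fun y : ℝ => y ^ 3 / 3 - y + Real.arctan y)
          ((3 * y ^ 2 / 3 - 1) + 1 / (1 + y ^ 2)) y := by
        exact (((hasDerivAt_pow 3 y).div_const 3).sub (hasDerivAt_id y)).add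
          (Real.hasDerivAt_arctan y)
      rw [hd.deriv]
      have h1 : (0:ℝ) < 1 + y ^ 2 := by positivity
      have : (3 * y ^ 2 / 3 - 1) + 1 / (1 + y ^ 2) = y ^ 4 / (1 + y ^ 2) := by
        field_simp
        ring
      rw [this]
      positivity
  have := hmono hx
  simp [Real.arctan_zero] at this
  linarith

/-- Scalar-mode midpoint-scheme estimate: with `t > 0`, `k ≥ 1`, `τ = t/k`,
`λ, ε > 0` and `β ∈ [0,1]`,
`|e^{iετλk/2} - e^{2ik·arctan(ετλ/4)}| ≤ 2 k^β |ετλ/4 - arctan(ετλ/4)|^β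
  ≤ C k^β (ετλ)^{3β}` for an absolute constant `C > 0`. -/
theorem midpoint_scalar_estimate :
    ∃ C : ℝ, C > 0 ∧
      ∀ (t : ℝ) (k : ℕ) (τ lam ε β : ℝ), 0 < t → 1 ≤ k → τ = t / k →
        0 < lam → 0 < ε → 0 ≤ β → β ≤ 1 →
        ‖Complex.exp (Complex.I * (ε * τ * lam / 2 * k)) -
            Complex.exp (2 * Complex.I * k * Real.arctan (ε * τ * lam / 4))‖ ≤
          2 * (k : ℝ) ^ β * |ε * τ * lam / 4 - Real.arctan (ε * τ * lam / 4)| ^ β ∧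
        2 * (k : ℝ) ^ β * |ε * τ * lam / 4 - Real.arctan (ε * τ * lam / 4)| ^ β ≤
          C * (k : ℝ) ^ β * (ε * τ * lam) ^ (3 * β) := by
  refine ⟨2, by norm_num, ?_⟩
  intro t k τ lam ε β ht hk hτ hlam hε hβ0 hβ1
  have hk0 : (0:ℝ) < (k : ℝ) := by exact_mod_cast Nat.lt_of_lt_of_le Nat.zero_lt_one hk
  have hτ0 : 0 < τ := by rw [hτ]; positivity
  set s : ℝ := ε * τ * lam with hs
  have hs0 : 0 < s := by positivity
  set x : ℝ := s / 4 with hx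
  have hx0 : 0 < x := by positivity
  set d : ℝ := x - Real.arctan x with hd
  have hd0 : 0 ≤ d := by
    have := arctan_le_self' hx0.le
    simp [hd]; linarith
  have habsd : |ε * τ * lam / 4 - Real.arctan (ε * τ * lam / 4)| = d := by
    rw [_root_.abs_of_nonneg hd0]
  -- rewrite the two exponential arguments
  have ha : Complex.I * (↑ε * ↑τ * ↑lam / 2 * ↑k) = ((ε * τ * lam / 2 * k : ℝ) : ℂ) * Complex.I := by
    push_cast; ring
  have hb : 2 * Complex.I * ↑k * ↑(Real.arctan (ε * τ * lam / 4)) =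
      ((2 * k * Real.arctan (ε * τ * lam / 4) : ℝ) : ℂ) * Complex.I := by
    push_cast; ring
  set a : ℝ := ε * τ * lam / 2 * k with hadef
  set b : ℝ := 2 * k * Real.arctan (ε * τ * lam / 4) with hbdef
  have hab : a - b = 2 * k * d := by
    simp only [hadef, hbdef, hd, hx, hs]
    ring
  constructor
  · -- first inequality
    rw [ha, hb, habsd]
    have hlin : ‖Complex.exp ((a:ℂ) * Complex.I) - Complex.exp ((b:ℂ) * Complex.I)‖
        ≤ |a - b| := abs_exp_I_sub_exp_I_le a b
    have htwo : ‖Complex.exp ((a:ℂ) * Complex.I) - Complex.exp ((b:ℂ) * Complex.I)‖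
        ≤ 2 := by
      calc ‖Complex.exp ((a:ℂ) * Complex.I) - Complex.exp ((b:ℂ) * Complex.I)‖
          ≤ ‖Complex.exp ((a:ℂ) * Complex.I)‖ +
            ‖Complex.exp ((b:ℂ) * Complex.I)‖ := by
            exact (norm_sub_le _ _)
        _ = 2 := by rw [Complex.norm_exp_ofReal_mul_I, Complex.norm_exp_ofReal_mul_I]; norm_num
    rcases eq_or_lt_of_le hd0 with hdz | hdz
    · -- d = 0 : LHS = 0
      have : a = b := by
        have := hab; rw [← hdz] at this; linarith
      rw [this]
      simp only [sub_self, norm_zero]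
      positivity
    · set y : ℝ := (k:ℝ) * d with hy
      have hy0 : 0 < y := by positivity
      have hrw : 2 * (k:ℝ) ^ β * d ^ β = 2 * y ^ β := by
        rw [hy, Real.mul_rpow hk0.le hd0, mul_assoc]
      rw [hrw]
      rcases le_or_gt y 1 with hy1 | hy1
      · calc ‖Complex.exp ((a:ℂ) * Complex.I) - Complex.exp ((b:ℂ) * Complex.I)‖
            ≤ |a - b| := hlin
          _ = 2 * y := by rw [hab, hy]; rw [_root_.abs_of_nonneg (by positivity)]; ring
          _ ≤ 2 * y ^ β := by
              have hle : y ^ (1:ℝ) ≤ y ^ β :=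
                Real.rpow_le_rpow_of_exponent_ge hy0 hy1 hβ1
              rw [Real.rpow_one] at hle
              linarith
      · calc ‖Complex.exp ((a:ℂ) * Complex.I) - Complex.exp ((b:ℂ) * Complex.I)‖
            ≤ 2 := htwo
          _ ≤ 2 * y ^ β := by
              have hle : (1:ℝ) ^ β ≤ y ^ β :=
                Real.rpow_le_rpow (by norm_num) hy1.le hβ0
              rw [Real.one_rpow] at hle
              linarith
  · -- second inequality
    rw [habsd]
    have hdx3 : d ≤ s ^ 3 := by
      have h1 : d ≤ x ^ 3 / 3 := self_sub_arctan_le hx0.le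
      have h2 : x ^ 3 / 3 ≤ x ^ 3 := by nlinarith [pow_pos hx0 3]
      have h3 : x ^ 3 ≤ s ^ 3 := by
        apply pow_le_pow_left₀ hx0.le
        rw [hx]; linarith
      linarith
    have hstep : d ^ β ≤ s ^ (3 * β) := by
      have : d ^ β ≤ (s ^ 3) ^ β := Real.rpow_le_rpow hd0 hdx3 hβ0
      calc d ^ β ≤ (s ^ 3) ^ β := this
        _ = s ^ (3 * β) := by
            rw [← Real.rpow_natCast s 3, ← Real.rpow_mul hs0.le]
            norm_num
    have hkb : (0:ℝ) ≤ (k:ℝ) ^ β := Real.rpow_nonneg hk0.le β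
    calc 2 * (k:ℝ) ^ β * d ^ β ≤ 2 * (k:ℝ) ^ β * s ^ (3 * β) := by
          apply mul_le_mul_of_nonneg_left hstep (by positivity)
      _ = 2 * (k:ℝ) ^ β * (ε * τ * lam) ^ (3 * β) := by rw [hs]
end

section
/- With the spectral setup above, let S^{α,ε}(t) v = Σ_k e^{(iελ_k/2 − α/ε)t} ⟨v,e_k⟩ e_k, and for a time step τ > 0 define the midpoint one-step operator S_τ^{α,ε} v = e^{−ατ/ε} Σ_k (1 + iετλ_k/4)(1 − iετλ_k/4)^{−1} ⟨v,e_k⟩ e_k. Then for every μ ∈ (0,6], k ∈ ℕ₊, and t_k = kτ, there is a constant C > 0 (independent of k, τ, ε, α, and the eigenvalues) such that the operator norm from (‖·‖_μ) to (‖·‖) satisfies ‖S^{α,ε}(t_k) − (S_τ^{α,ε})^k‖_{L(Ḣ^μ, L²)} ≤ C e^{−α t_k/ε} t_k^{μ/6} ε^{μ/2} τ^{μ/3}. -/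
open Real Complex
lemma aux_arctan_le_self {a : ℝ} (ha : 0 ≤ a) : Real.arctan a ≤ a := by
  have hmono : Monotone (fun x : ℝ => x - Real.arctan x) := by
    apply monotone_of_deriv_nonneg
    · exact differentiable_id.sub Real.differentiable_arctan
    · intro x
      have h : HasDerivAt (fun x : ℝ => x - Real.arctan x) (1 - 1 / (1 + x ^ 2)) x :=
        (hasDerivAt_id x).sub (Real.hasDerivAt_arctan x)
      rw [h.deriv]
      have h1 : (0:ℝ) < 1 + x ^ 2 := by positivity
      have h2 : 1 / (1 + x ^ 2) ≤ 1 := by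
        rw [div_le_one h1]; nlinarith [sq_nonneg x]
      linarith
  have := hmono ha
  simpa [Real.arctan_zero] using this

lemma aux_sub_arctan_le_cube {a : ℝ} (ha : 0 ≤ a) : a - Real.arctan a ≤ a ^ 3 := by
  have hmono : Monotone (fun x : ℝ => x ^ 3 - x + Real.arctan x) := by
    apply monotone_of_deriv_nonneg
    · exact (differentiable_pow 3 |>.sub differentiable_id).add Real.differentiable_arctan
    · intro x
      have h : HasDerivAt (fun x : ℝ => x ^ 3 - x + Real.arctan x)
          ((3 : ℕ) * x ^ 2 - 1 + 1 / (1 + x ^ 2)) x := by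
        have := ((hasDerivAt_pow 3 x).sub (hasDerivAt_id x)).add (Real.hasDerivAt_arctan x)
        exact this.congr_deriv (by norm_num)
      rw [h.deriv]
      have h1 : (0:ℝ) < 1 + x ^ 2 := by positivity
      have key : ((3 : ℕ) : ℝ) * x ^ 2 - 1 + 1 / (1 + x ^ 2) = (3 * x ^ 4 + 2 * x ^ 2) / (1 + x ^ 2) := by
        push_cast
        field_simp
        ring
      rw [key]
      positivity
  have := hmono ha
  simp only [Real.arctan_zero] at this
  nlinarith [this]

lemma aux_cayley (a : ℝ) :
    (1 + Complex.I * a) / (1 - Complex.I * a) = Complex.exp ((2 * Real.arctan a : ℝ) * Complex.I) := by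
  have h1 : (0:ℝ) < 1 + a ^ 2 := by positivity
  have hcos : Real.cos (2 * Real.arctan a) = (1 - a ^ 2) / (1 + a ^ 2) := by
    rw [Real.cos_two_mul, Real.cos_sq_arctan]
    field_simp
    ring
  have hsin : Real.sin (2 * Real.arctan a) = 2 * a / (1 + a ^ 2) := by
    rw [Real.sin_two_mul, Real.sin_arctan, Real.cos_arctan]
    have hss : Real.sqrt (1 + a ^ 2) ^ 2 = 1 + a ^ 2 := Real.sq_sqrt h1.le
    have hs0 : Real.sqrt (1 + a ^ 2) ≠ 0 := by positivity
    field_simp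
    rw [hss]
  have hne : (1 - Complex.I * a) ≠ 0 := by
    intro h
    have := congrArg Complex.re h
    simp at this
  rw [div_eq_iff hne, Complex.exp_mul_I, ← Complex.ofReal_cos, ← Complex.ofReal_sin, hcos, hsin]
  have h1c : ((1 + a ^ 2 : ℝ) : ℂ) ≠ 0 := by exact_mod_cast h1.ne'
  push_cast
  have h1c' : ((1:ℂ) + (a:ℂ) ^ 2) ≠ 0 := by push_cast at h1c; exact h1c
  field_simp
  linear_combination (2 * (a:ℂ) ^ 2) * Complex.I_sq

lemma aux_exp_I_sub_one (t : ℝ) : ‖Complex.exp ((t:ℝ) * Complex.I) - 1‖ ≤ |t| := by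
  have hnorm : ‖Complex.exp ((t:ℝ) * Complex.I) - 1‖ ^ 2 = 2 - 2 * Real.cos t := by
    rw [Complex.exp_mul_I, ← Complex.ofReal_cos, ← Complex.ofReal_sin,
      Complex.sq_norm]
    simp only [Complex.normSq_apply, Complex.sub_re, Complex.sub_im, Complex.add_re,
      Complex.add_im, Complex.mul_re, Complex.mul_im, Complex.I_re, Complex.I_im,
      Complex.ofReal_re, Complex.ofReal_im, Complex.one_re, Complex.one_im]
    nlinarith [Real.sin_sq_add_cos_sq t]
  have h2 : ‖Complex.exp ((t:ℝ) * Complex.I) - 1‖ ^ 2 ≤ t ^ 2 := by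
    rw [hnorm]
    nlinarith [Real.one_sub_sq_div_two_le_cos (x := t)]
  calc ‖Complex.exp ((t:ℝ) * Complex.I) - 1‖
      = Real.sqrt (‖Complex.exp ((t:ℝ) * Complex.I) - 1‖ ^ 2) := (Real.sqrt_sq (norm_nonneg _)).symm
    _ ≤ Real.sqrt (t ^ 2) := Real.sqrt_le_sqrt h2
    _ = |t| := Real.sqrt_sq_eq_abs t

lemma aux_exp_I_sub (x y : ℝ) :
    ‖Complex.exp ((x:ℝ) * Complex.I) - Complex.exp ((y:ℝ) * Complex.I)‖ ≤ min 2 |x - y| := by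
  apply le_min
  · calc ‖Complex.exp ((x:ℝ) * Complex.I) - Complex.exp ((y:ℝ) * Complex.I)‖
        ≤ ‖Complex.exp ((x:ℝ) * Complex.I)‖ + ‖Complex.exp ((y:ℝ) * Complex.I)‖ := norm_sub_le _ _
      _ = 2 := by rw [Complex.norm_exp_ofReal_mul_I,
          Complex.norm_exp_ofReal_mul_I]; norm_num
  · have hfac : Complex.exp ((x:ℝ) * Complex.I) - Complex.exp ((y:ℝ) * Complex.I)
        = Complex.exp ((y:ℝ) * Complex.I) * (Complex.exp (((x - y : ℝ) : ℂ) * Complex.I) - 1) := by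
      rw [mul_sub, mul_one, ← Complex.exp_add]
      push_cast
      ring_nf
    rw [hfac, norm_mul, Complex.norm_exp_ofReal_mul_I, one_mul]
    exact aux_exp_I_sub_one (x - y)

lemma aux_min_rpow {d β : ℝ} (hd : 0 ≤ d) (hβ0 : 0 < β) (hβ1 : β ≤ 1) :
    min 2 d ≤ 2 * d ^ β := by
  rcases le_or_gt d 1 with h | h
  · rcases eq_or_lt_of_le hd with h0 | h0
    · simp [← h0, Real.zero_rpow hβ0.ne']
    · have h1 : d ^ (1:ℝ) ≤ d ^ β := Real.rpow_le_rpow_of_exponent_ge h0 h hβ1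
      rw [Real.rpow_one] at h1
      have : min 2 d ≤ d := min_le_right _ _
      have hdb : 0 ≤ d ^ β := Real.rpow_nonneg hd β
      linarith
  · have h1 : (1:ℝ) ≤ d ^ β := by
      calc (1:ℝ) = 1 ^ β := (Real.one_rpow β).symm
        _ ≤ d ^ β := Real.rpow_le_rpow zero_le_one h.le hβ0.le
    have : min 2 d ≤ 2 := min_le_left _ _
    linarith

lemma aux_mode (μ : ℝ) (hμ0 : 0 < μ) (hμ6 : μ ≤ 6) (k : ℕ) (hk : 1 ≤ k)
    (τ ε α L : ℝ) (hτ : 0 < τ) (hε : 0 < ε) (hL : 0 < L) :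
    ‖Complex.exp ((Complex.I * (ε * L) / 2 - (α : ℂ) / ε) * ((k : ℝ) * τ)) -
        (Complex.exp (-(α : ℂ) * τ / ε) *
          ((1 + Complex.I * (ε * τ * L) / 4) /
            (1 - Complex.I * (ε * τ * L) / 4))) ^ k‖ ≤
      2 * Real.exp (-α * ((k : ℝ) * τ) / ε) * ((k : ℝ) * τ) ^ (μ / 6) * ε ^ (μ / 2) *
        τ ^ (μ / 3) * L ^ (μ / 2) := by
  set a : ℝ := ε * τ * L / 4 with ha_def
  have ha : 0 < a := by positivity
  set r : ℝ := -α * ((k : ℝ) * τ) / ε with hr_def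
  set x : ℝ := ε * L * ((k : ℝ) * τ) / 2 with hx_def
  set y : ℝ := (k : ℝ) * (2 * Real.arctan a) with hy_def
  -- rewrite the two terms
  have e1 : Complex.exp ((Complex.I * (ε * L) / 2 - (α : ℂ) / ε) * ((k : ℝ) * τ))
      = Complex.exp ((r : ℝ)) * Complex.exp ((x : ℝ) * Complex.I) := by
    rw [← Complex.exp_add]
    congr 1
    have hεc : (ε : ℂ) ≠ 0 := by exact_mod_cast hε.ne'
    rw [hx_def, hr_def]
    push_cast
    ring
  have ha' : Complex.I * ((ε : ℂ) * (τ : ℂ) * (L : ℂ)) / 4 = Complex.I * (a : ℝ) := by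
    rw [ha_def]
    push_cast
    ring
  have e2 : (Complex.exp (-(α : ℂ) * τ / ε) *
        ((1 + Complex.I * (ε * τ * L) / 4) / (1 - Complex.I * (ε * τ * L) / 4))) ^ k
      = Complex.exp ((r : ℝ)) * Complex.exp ((y : ℝ) * Complex.I) := by
    have hεc : (ε : ℂ) ≠ 0 := by exact_mod_cast hε.ne'
    rw [mul_pow, ha', aux_cayley a, ← Complex.exp_nat_mul, ← Complex.exp_nat_mul]
    congr 1
    · congr 1
      rw [hr_def]
      push_cast
      ring
    · congr 1
      rw [hy_def]
      push_cast
      ring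
  rw [e1, e2, ← mul_sub, norm_mul]
  have hnr : ‖Complex.exp ((r : ℝ))‖ = Real.exp r := by
    rw [Complex.norm_exp, Complex.ofReal_re]
  rw [hnr]
  -- bound the unimodular difference
  have hxy : |x - y| ≤ (k : ℝ) * (ε * τ * L) ^ 3 := by
    have h1 : Real.arctan a ≤ a := aux_arctan_le_self ha.le
    have h2 : a - Real.arctan a ≤ a ^ 3 := aux_sub_arctan_le_cube ha.le
    have hx_eq : x - y = 2 * (k : ℝ) * (a - Real.arctan a) := by
      rw [hx_def, hy_def, ha_def]; ring
    have hk0 : (0:ℝ) ≤ (k : ℝ) := Nat.cast_nonneg k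
    rw [hx_eq, _root_.abs_of_nonneg (by nlinarith)]
    have ha3 : 2 * a ^ 3 ≤ (ε * τ * L) ^ 3 := by
      rw [ha_def]
      have h4 : (0:ℝ) < ε * τ * L := by positivity
      nlinarith [pow_pos h4 3]
    nlinarith [pow_pos (show (0:ℝ) < ε * τ * L by positivity) 3]
  have hdiff : ‖Complex.exp ((x : ℝ) * Complex.I) - Complex.exp ((y : ℝ) * Complex.I)‖
      ≤ 2 * ((k : ℝ) * (ε * τ * L) ^ 3) ^ (μ / 6) := by
    calc ‖Complex.exp ((x : ℝ) * Complex.I) - Complex.exp ((y : ℝ) * Complex.I)‖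
        ≤ min 2 |x - y| := aux_exp_I_sub x y
      _ ≤ 2 * |x - y| ^ (μ / 6) := aux_min_rpow (abs_nonneg _) (by linarith) (by linarith)
      _ ≤ 2 * ((k : ℝ) * (ε * τ * L) ^ 3) ^ (μ / 6) := by
          gcongr
  -- rpow algebra
  have hk0 : (0:ℝ) ≤ (k : ℝ) := Nat.cast_nonneg k
  have hL0 : (0:ℝ) ≤ ε * τ * L := by positivity
  have h3 : ((k : ℝ) * (ε * τ * L) ^ 3) ^ (μ / 6)
      = (k : ℝ) ^ (μ / 6) * (ε ^ (μ / 2) * (τ ^ (μ / 2) * L ^ (μ / 2))) := by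
    rw [Real.mul_rpow hk0 (pow_nonneg hL0 3), ← Real.rpow_natCast (ε * τ * L) 3,
      ← Real.rpow_mul hL0]
    have : ((3:ℕ) : ℝ) * (μ / 6) = μ / 2 := by push_cast; ring
    rw [this, Real.mul_rpow (by positivity) hL.le, Real.mul_rpow hε.le hτ.le]
    ring
  have h4 : (k : ℝ) ^ (μ / 6) * τ ^ (μ / 2) = ((k : ℝ) * τ) ^ (μ / 6) * τ ^ (μ / 3) := by
    rw [Real.mul_rpow hk0 hτ.le, show μ / 2 = μ / 6 + μ / 3 by ring, Real.rpow_add hτ]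
    ring
  have hfinal : 2 * ((k : ℝ) * (ε * τ * L) ^ 3) ^ (μ / 6)
      = 2 * (((k : ℝ) * τ) ^ (μ / 6) * ε ^ (μ / 2) * τ ^ (μ / 3) * L ^ (μ / 2)) := by
    rw [h3]
    linear_combination (2 * ε ^ (μ / 2) * L ^ (μ / 2)) * h4
  have hexp : (0:ℝ) < Real.exp r := Real.exp_pos r
  calc Real.exp r * ‖Complex.exp ((x : ℝ) * Complex.I) - Complex.exp ((y : ℝ) * Complex.I)‖
      ≤ Real.exp r * (2 * ((k : ℝ) * (ε * τ * L) ^ 3) ^ (μ / 6)) := by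
        exact mul_le_mul_of_nonneg_left hdiff hexp.le
    _ = 2 * Real.exp r * (((k : ℝ) * τ) ^ (μ / 6) * ε ^ (μ / 2) * τ ^ (μ / 3) * L ^ (μ / 2)) := by
        rw [hfinal]; ring
    _ = 2 * Real.exp (-α * ((k : ℝ) * τ) / ε) * ((k : ℝ) * τ) ^ (μ / 6) * ε ^ (μ / 2) *
        τ ^ (μ / 3) * L ^ (μ / 2) := by rw [hr_def]; ring



/-- Midpoint-scheme vs exact propagator estimate (Lemma 5.4): in spectral
coordinates `c m = ⟨v, e_m⟩`, the exact damped propagator over time `t_k = kτ`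
multiplies the `m`-th mode by `e^{(iελ_m/2 - α/ε) t_k}` while `k` steps of the
midpoint scheme multiply it by `(e^{-ατ/ε}·(1+iετλ_m/4)/(1-iετλ_m/4))^k`.
For every `μ ∈ (0,6]` there is a constant `C > 0`, independent of `k`, `τ`, `ε`,
`α` and the eigenvalues, with
`‖(S^{α,ε}(t_k) - (S_τ^{α,ε})^k) v‖ ≤ C e^{-α t_k/ε} t_k^{μ/6} ε^{μ/2} τ^{μ/3} ‖v‖_μ`. -/
theorem midpoint_propagator_error :
    ∃ C : ℝ, C > 0 ∧
      ∀ (μ : ℝ), 0 < μ → μ ≤ 6 →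
      ∀ (k : ℕ), 1 ≤ k →
      ∀ (τ ε α : ℝ), 0 < τ → 0 < ε →
      ∀ (lam : ℕ → ℝ), (∀ m, 0 < lam m) → Monotone lam →
      ∀ (c : ℕ → ℂ), (Summable fun m => lam m ^ μ * ‖c m‖ ^ 2) →
        Real.sqrt (∑' m,
            ‖(Complex.exp ((Complex.I * (ε * lam m) / 2 - (α : ℂ) / ε) * ((k : ℝ) * τ)) -
                (Complex.exp (-(α : ℂ) * τ / ε) *
                  ((1 + Complex.I * (ε * τ * lam m) / 4) /
                    (1 - Complex.I * (ε * τ * lam m) / 4))) ^ k) * c m‖ ^ 2) ≤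
          C * Real.exp (-α * ((k : ℝ) * τ) / ε) * ((k : ℝ) * τ) ^ (μ / 6) *
            ε ^ (μ / 2) * τ ^ (μ / 3) *
            Real.sqrt (∑' m, lam m ^ μ * ‖c m‖ ^ 2) := by
  refine ⟨2, by norm_num, ?_⟩
  intro μ hμ0 hμ6 k hk τ ε α hτ hε lam hlam hmono c hsum
  set K : ℝ := 2 * Real.exp (-α * ((k : ℝ) * τ) / ε) * ((k : ℝ) * τ) ^ (μ / 6) *
      ε ^ (μ / 2) * τ ^ (μ / 3) with hK_def
  have hK : 0 ≤ K := by rw [hK_def]; positivity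
  have hsq : ∀ m,
      ‖(Complex.exp ((Complex.I * (ε * lam m) / 2 - (α : ℂ) / ε) * ((k : ℝ) * τ)) -
          (Complex.exp (-(α : ℂ) * τ / ε) *
            ((1 + Complex.I * (ε * τ * lam m) / 4) /
              (1 - Complex.I * (ε * τ * lam m) / 4))) ^ k) * c m‖ ^ 2
        ≤ K ^ 2 * (lam m ^ μ * ‖c m‖ ^ 2) := by
    intro m
    have hmode := aux_mode μ hμ0 hμ6 k hk τ ε α (lam m) hτ hε (hlam m)
    rw [norm_mul, mul_pow]
    have h1 : ‖Complex.exp ((Complex.I * (ε * lam m) / 2 - (α : ℂ) / ε) * ((k : ℝ) * τ)) -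
          (Complex.exp (-(α : ℂ) * τ / ε) *
            ((1 + Complex.I * (ε * τ * lam m) / 4) /
              (1 - Complex.I * (ε * τ * lam m) / 4))) ^ k‖ ^ 2
        ≤ (K * lam m ^ (μ / 2)) ^ 2 := by
      apply pow_le_pow_left₀ (norm_nonneg _) _ 2
      exact hmode
    have h2 : (K * lam m ^ (μ / 2)) ^ 2 = K ^ 2 * lam m ^ μ := by
      rw [mul_pow, ← Real.rpow_natCast (lam m ^ (μ / 2)) 2, ← Real.rpow_mul (hlam m).le]
      norm_num
    calc ‖Complex.exp ((Complex.I * (ε * lam m) / 2 - (α : ℂ) / ε) * ((k : ℝ) * τ)) -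
          (Complex.exp (-(α : ℂ) * τ / ε) *
            ((1 + Complex.I * (ε * τ * lam m) / 4) /
              (1 - Complex.I * (ε * τ * lam m) / 4))) ^ k‖ ^ 2 * ‖c m‖ ^ 2
        ≤ (K * lam m ^ (μ / 2)) ^ 2 * ‖c m‖ ^ 2 :=
          mul_le_mul_of_nonneg_right h1 (by positivity)
      _ = K ^ 2 * (lam m ^ μ * ‖c m‖ ^ 2) := by rw [h2]; ring
  have hsum2 : Summable (fun m => K ^ 2 * (lam m ^ μ * ‖c m‖ ^ 2)) := hsum.mul_left _
  have hsumL : Summable (fun m =>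
      ‖(Complex.exp ((Complex.I * (ε * lam m) / 2 - (α : ℂ) / ε) * ((k : ℝ) * τ)) -
          (Complex.exp (-(α : ℂ) * τ / ε) *
            ((1 + Complex.I * (ε * τ * lam m) / 4) /
              (1 - Complex.I * (ε * τ * lam m) / 4))) ^ k) * c m‖ ^ 2) :=
    Summable.of_nonneg_of_le (fun m => by positivity) hsq hsum2
  have htsum : (∑' m,
      ‖(Complex.exp ((Complex.I * (ε * lam m) / 2 - (α : ℂ) / ε) * ((k : ℝ) * τ)) -
          (Complex.exp (-(α : ℂ) * τ / ε) *
            ((1 + Complex.I * (ε * τ * lam m) / 4) /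
              (1 - Complex.I * (ε * τ * lam m) / 4))) ^ k) * c m‖ ^ 2)
      ≤ K ^ 2 * ∑' m, lam m ^ μ * ‖c m‖ ^ 2 := by
    calc _ ≤ ∑' m, K ^ 2 * (lam m ^ μ * ‖c m‖ ^ 2) := Summable.tsum_le_tsum hsq hsumL hsum2
      _ = K ^ 2 * ∑' m, lam m ^ μ * ‖c m‖ ^ 2 := tsum_mul_left
  calc Real.sqrt (∑' m,
      ‖(Complex.exp ((Complex.I * (ε * lam m) / 2 - (α : ℂ) / ε) * ((k : ℝ) * τ)) -
          (Complex.exp (-(α : ℂ) * τ / ε) *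
            ((1 + Complex.I * (ε * τ * lam m) / 4) /
              (1 - Complex.I * (ε * τ * lam m) / 4))) ^ k) * c m‖ ^ 2)
      ≤ Real.sqrt (K ^ 2 * ∑' m, lam m ^ μ * ‖c m‖ ^ 2) := Real.sqrt_le_sqrt htsum
    _ = K * Real.sqrt (∑' m, lam m ^ μ * ‖c m‖ ^ 2) := by
        rw [Real.sqrt_mul (by positivity), Real.sqrt_sq hK]
end
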